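/- There exists an infinite strictly increasing chain of finite sets of integers A₁ ⊂ A₂ ⊂ A₃ ⊂ ⋯ such that A_i is MSTD for all odd i and MDTS for all even i. -/

import Mathlib

open Finset Pointwise

/-- Odd-index set: left fringe {0,1,2,5}, full middle, right fringe n-{0,1,3,4}. -/
noncomputable def Aodd (n : ℤ) : Finset ℤ :=
  ({0, 1, 2, 5} : Finset ℤ) ∪ Finset.Icc 8 (n - 8) ∪ {n - 4, n - 3, n - 1, n}

/-- Even-index set: left fringe {0,1,2,5}, full middle, right fringe n-{0,1,2}. -/
noncomputable def Aeven (n : ℤ) : Finset ℤ :=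
  ({0, 1, 2, 5} : Finset ℤ) ∪ Finset.Icc 8 (n - 8) ∪ {n - 2, n - 1, n}

lemma mem_Aodd {n x : ℤ} :
    x ∈ Aodd n ↔ x = 0 ∨ x = 1 ∨ x = 2 ∨ x = 5 ∨ (8 ≤ x ∧ x ≤ n - 8) ∨
      x = n - 4 ∨ x = n - 3 ∨ x = n - 1 ∨ x = n := by
  simp only [Aodd, Finset.mem_union, Finset.mem_insert, Finset.mem_singleton, Finset.mem_Icc]
  tauto

lemma mem_Aeven {n x : ℤ} :
    x ∈ Aeven n ↔ x = 0 ∨ x = 1 ∨ x = 2 ∨ x = 5 ∨ (8 ≤ x ∧ x ≤ n - 8) ∨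
      x = n - 2 ∨ x = n - 1 ∨ x = n := by
  simp only [Aeven, Finset.mem_union, Finset.mem_insert, Finset.mem_singleton, Finset.mem_Icc]
  tauto

lemma sum_odd {n : ℤ} (hn : 40 ≤ n) : Aodd n + Aodd n = Finset.Icc 0 (2 * n) := by
  ext s
  simp only [Finset.mem_add, Finset.mem_Icc]
  constructor
  · rintro ⟨a, ha, b, hb, rfl⟩
    rw [mem_Aodd] at ha hb
    omega
  · rintro ⟨h0, h2n⟩
    by_cases hs1 : s ≤ 7
    · have hall : ∀ u ∈ Finset.Icc (0 : ℤ) 7, ∃ a ∈ ({0, 1, 2, 5} : Finset ℤ),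
        ∃ b ∈ ({0, 1, 2, 5} : Finset ℤ), a + b = u := by decide
      obtain ⟨a, ha, b, hb, hab⟩ := hall s (by simp only [Finset.mem_Icc]; omega)
      have ha' : a = 0 ∨ a = 1 ∨ a = 2 ∨ a = 5 := by simpa using ha
      have hb' : b = 0 ∨ b = 1 ∨ b = 2 ∨ b = 5 := by simpa using hb
      exact ⟨a, mem_Aodd.2 (by omega), b, mem_Aodd.2 (by omega), hab⟩
    · by_cases hs2 : s ≤ n - 8
      · exact ⟨0, mem_Aodd.2 (by omega), s, mem_Aodd.2 (by omega), by omega⟩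
      · by_cases hs3 : s ≤ n
        · exact ⟨8, mem_Aodd.2 (by omega), s - 8, mem_Aodd.2 (by omega), by omega⟩
        · by_cases hs4 : s ≤ 2 * n - 16
          · exact ⟨s - (n - 8), mem_Aodd.2 (by omega), n - 8, mem_Aodd.2 (by omega), by omega⟩
          · by_cases hs5 : s ≤ 2 * n - 8
            · exact ⟨s - n, mem_Aodd.2 (by omega), n, mem_Aodd.2 (by omega), by omega⟩
            · have hall : ∀ u ∈ Finset.Icc (0 : ℤ) 7, ∃ a ∈ ({0, 1, 3, 4} : Finset ℤ),
                ∃ b ∈ ({0, 1, 3, 4} : Finset ℤ), a + b = u := by decide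
              obtain ⟨a, ha, b, hb, hab⟩ := hall (2 * n - s)
                (by simp only [Finset.mem_Icc]; omega)
              have ha' : a = 0 ∨ a = 1 ∨ a = 3 ∨ a = 4 := by simpa using ha
              have hb' : b = 0 ∨ b = 1 ∨ b = 3 ∨ b = 4 := by simpa using hb
              exact ⟨n - a, mem_Aodd.2 (by omega), n - b, mem_Aodd.2 (by omega), by omega⟩

lemma diff_odd_sub {n : ℤ} (hn : 40 ≤ n) : Aodd n - Aodd n ⊆ Finset.Icc (-n) n := by
  intro x hx
  rw [Finset.mem_sub] at hx
  obtain ⟨a, ha, b, hb, rfl⟩ := hx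
  rw [mem_Aodd] at ha hb
  rw [Finset.mem_Icc]
  omega

lemma diff_odd_miss {n : ℤ} (hn : 40 ≤ n) : n - 7 ∉ Aodd n - Aodd n := by
  rw [Finset.mem_sub]
  rintro ⟨a, ha, b, hb, hab⟩
  rw [mem_Aodd] at ha hb
  omega

lemma diff_even {n : ℤ} (hn : 40 ≤ n) : Aeven n - Aeven n = Finset.Icc (-n) n := by
  have hpos : ∀ d : ℤ, 0 ≤ d → d ≤ n →
      ∃ a ∈ Aeven n, ∃ b ∈ Aeven n, a - b = d := by
    intro d hd0 hdn
    by_cases h1 : d ≤ n - 16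
    · exact ⟨d + 8, mem_Aeven.2 (by omega), 8, mem_Aeven.2 (by omega), by omega⟩
    · by_cases h2 : d ≤ n - 8
      · exact ⟨n, mem_Aeven.2 (by omega), n - d, mem_Aeven.2 (by omega), by omega⟩
      · have hall : ∀ u ∈ Finset.Icc (0 : ℤ) 7, ∃ r ∈ ({0, 1, 2} : Finset ℤ),
          ∃ l ∈ ({0, 1, 2, 5} : Finset ℤ), r + l = u := by decide
        obtain ⟨r, hr, l, hl, hrl⟩ := hall (n - d) (by simp only [Finset.mem_Icc]; omega)
        have hr' : r = 0 ∨ r = 1 ∨ r = 2 := by simpa using hr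
        have hl' : l = 0 ∨ l = 1 ∨ l = 2 ∨ l = 5 := by simpa using hl
        exact ⟨n - r, mem_Aeven.2 (by omega), l, mem_Aeven.2 (by omega), by omega⟩
  ext x
  simp only [Finset.mem_sub, Finset.mem_Icc]
  constructor
  · rintro ⟨a, ha, b, hb, rfl⟩
    rw [mem_Aeven] at ha hb
    omega
  · rintro ⟨hx1, hx2⟩
    by_cases hx : 0 ≤ x
    · exact hpos x hx hx2
    · obtain ⟨a, ha, b, hb, hab⟩ := hpos (-x) (by omega) (by omega)
      exact ⟨b, hb, a, ha, by omega⟩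

lemma sum_even_sub {n : ℤ} (hn : 40 ≤ n) : Aeven n + Aeven n ⊆ Finset.Icc 0 (2 * n) := by
  intro x hx
  rw [Finset.mem_add] at hx
  obtain ⟨a, ha, b, hb, rfl⟩ := hx
  rw [mem_Aeven] at ha hb
  rw [Finset.mem_Icc]
  omega

lemma sum_even_miss {n : ℤ} (hn : 40 ≤ n) : 2 * n - 5 ∉ Aeven n + Aeven n := by
  rw [Finset.mem_add]
  rintro ⟨a, ha, b, hb, hab⟩
  rw [mem_Aeven] at ha hb
  omega

lemma mstd_card {n : ℤ} (hn : 40 ≤ n) :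
    (Aodd n - Aodd n).card < (Aodd n + Aodd n).card := by
  have h1 : (Aodd n + Aodd n).card = (2 * n + 1).toNat := by
    rw [sum_odd hn, Int.card_Icc]
    congr 1
    omega
  have h2 : Aodd n - Aodd n ⊆ (Finset.Icc (-n) n).erase (n - 7) := by
    intro x hx
    rw [Finset.mem_erase]
    refine ⟨?_, diff_odd_sub hn hx⟩
    rintro rfl
    exact diff_odd_miss hn hx
  have h3 := Finset.card_le_card h2
  have h4 : ((Finset.Icc (-n) n).erase (n - 7)).card = (Finset.Icc (-n) n).card - 1 :=
    Finset.card_erase_of_mem (by rw [Finset.mem_Icc]; omega)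
  have h5 : (Finset.Icc (-n) n).card = (n + 1 - -n).toNat := Int.card_Icc _ _
  omega

lemma mdts_card {n : ℤ} (hn : 40 ≤ n) :
    (Aeven n + Aeven n).card < (Aeven n - Aeven n).card := by
  have h1 : (Aeven n - Aeven n).card = (n + 1 - -n).toNat := by
    rw [diff_even hn, Int.card_Icc]
  have h2 : Aeven n + Aeven n ⊆ (Finset.Icc 0 (2 * n)).erase (2 * n - 5) := by
    intro x hx
    rw [Finset.mem_erase]
    refine ⟨?_, sum_even_sub hn hx⟩
    rintro rfl
    exact sum_even_miss hn hx
  have h3 := Finset.card_le_card h2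
  have h4 : ((Finset.Icc (0 : ℤ) (2 * n)).erase (2 * n - 5)).card
      = (Finset.Icc (0 : ℤ) (2 * n)).card - 1 :=
    Finset.card_erase_of_mem (by rw [Finset.mem_Icc]; omega)
  have h5 : (Finset.Icc (0 : ℤ) (2 * n)).card = (2 * n + 1 - 0).toNat := Int.card_Icc _ _
  omega

lemma chain_oe {n n' : ℤ} (hn : 40 ≤ n) (h : n + 8 ≤ n') : Aodd n ⊂ Aeven n' := by
  have hsub : Aodd n ⊆ Aeven n' := by
    intro x hx
    rw [mem_Aodd] at hx
    rw [mem_Aeven]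
    omega
  rw [Finset.ssubset_iff_of_subset hsub]
  refine ⟨n', mem_Aeven.2 (by omega), fun hc => ?_⟩
  rw [mem_Aodd] at hc
  omega

lemma chain_eo {n n' : ℤ} (hn : 40 ≤ n) (h : n + 8 ≤ n') : Aeven n ⊂ Aodd n' := by
  have hsub : Aeven n ⊆ Aodd n' := by
    intro x hx
    rw [mem_Aeven] at hx
    rw [mem_Aodd]
    omega
  rw [Finset.ssubset_iff_of_subset hsub]
  refine ⟨n', mem_Aodd.2 (by omega), fun hc => ?_⟩
  rw [mem_Aeven] at hc
  omega

theorem stmt_16 :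
    ∃ A : ℕ → Finset ℤ,
      (∀ i, 1 ≤ i → A i ⊂ A (i + 1)) ∧
      (∀ i, 1 ≤ i → Odd i → (A i - A i).card < (A i + A i).card) ∧
      (∀ i, 1 ≤ i → Even i → (A i + A i).card < (A i - A i).card) := by
  refine ⟨fun i => if Odd i then Aodd (40 + 8 * (i : ℤ)) else Aeven (40 + 8 * (i : ℤ)),
    ?_, ?_, ?_⟩
  · intro i hi
    have hn : (40 : ℤ) ≤ 40 + 8 * (i : ℤ) := by omega
    have hcast : ((i + 1 : ℕ) : ℤ) = (i : ℤ) + 1 := by push_cast; ring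
    rcases Nat.even_or_odd i with he | ho
    · have h1 : ¬ Odd i := by simpa [Nat.not_odd_iff_even] using he
      have h2 : Odd (i + 1) := Even.add_one he
      simp only [h1, h2, if_true, if_false, if_pos, if_neg, not_false_iff]
      exact chain_eo hn (by rw [hcast]; omega)
    · have h1 : Odd i := ho
      have h2 : ¬ Odd (i + 1) := by
        simp [Nat.not_odd_iff_even]
        exact Odd.add_one ho
      simp only [h1, h2, if_true, if_false]
      exact chain_oe hn (by rw [hcast]; omega)
  · intro i hi hodd
    have hn : (40 : ℤ) ≤ 40 + 8 * (i : ℤ) := by omega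
    simp only [hodd, if_true]
    exact mstd_card hn
  · intro i hi heven
    have hn : (40 : ℤ) ≤ 40 + 8 * (i : ℤ) := by omega
    have h1 : ¬ Odd i := by simpa [Nat.not_odd_iff_even] using heven
    simp only [h1, if_false]
    exact mdts_card hn
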